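/- Let h: (r₀,∞) → ℝ be C² with h' never zero, and set y(r) = −1/(1+(h'(r))²). Then the scalar curvature of the rotationally symmetric graph of h satisfies R ≡ 0 if and only if y' + ((n−2)/r)·y + (n−2)/r = 0, i.e. if and only if y(r) = C₁ r^{2−n} − 1 for some constant C₁, equivalently (h'(r))² = C₁/(r^{n−2} − C₁). -/

import Mathlib

open Set

theorem scalar_flat_ode (n : ℕ) (hn : 3 ≤ n) (r₀ : ℝ) (hr₀ : 0 ≤ r₀)
    (h : ℝ → ℝ) (hh : ContDiffOn ℝ 2 h (Ioi r₀))
    (h' : ∀ r ∈ Ioi r₀, deriv h r ≠ 0)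
    (R y : ℝ → ℝ)
    (hR : ∀ r ∈ Ioi r₀, R r
      = 2 * (((n : ℝ) - 1) * deriv (deriv h) r * deriv h r / (r * (1 + (deriv h r) ^ 2) ^ 2)
          + (((n : ℝ) - 1) * ((n : ℝ) - 2) / 2) * (deriv h r) ^ 2
              / (r ^ 2 * (1 + (deriv h r) ^ 2))))
    (hy : ∀ r ∈ Ioi r₀, y r = -1 / (1 + (deriv h r) ^ 2)) :
    ((∀ r ∈ Ioi r₀, R r = 0) ↔
        (∀ r ∈ Ioi r₀, deriv y r + (((n : ℝ) - 2) / r) * y r + ((n : ℝ) - 2) / r = 0))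
    ∧ ((∀ r ∈ Ioi r₀, deriv y r + (((n : ℝ) - 2) / r) * y r + ((n : ℝ) - 2) / r = 0) ↔
        (∃ C₁ : ℝ, ∀ r ∈ Ioi r₀, y r = C₁ * r ^ ((2 : ℝ) - (n : ℝ)) - 1))
    ∧ (∀ C₁ : ℝ, (∀ r ∈ Ioi r₀, y r = C₁ * r ^ ((2 : ℝ) - (n : ℝ)) - 1) ↔
        (∀ r ∈ Ioi r₀, (deriv h r) ^ 2 = C₁ / (r ^ ((n : ℝ) - 2) - C₁))) := by
  have hn3 : (3 : ℝ) ≤ (n : ℝ) := by exact_mod_cast hn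
  have hopen : IsOpen (Ioi r₀) := isOpen_Ioi
  have hrpos : ∀ r ∈ Ioi r₀, (0 : ℝ) < r := fun r hr => lt_of_le_of_lt hr₀ hr
  have hupos : ∀ r : ℝ, (0 : ℝ) < 1 + (deriv h r) ^ 2 := fun r => by positivity
  have hune : ∀ r : ℝ, (1 : ℝ) + (deriv h r) ^ 2 ≠ 0 := fun r => (hupos r).ne'
  -- deriv h is differentiable on Ioi r₀
  have hd2 : DifferentiableOn ℝ (deriv h) (Ioi r₀) := by
    have := hh.deriv_of_isOpen (m := 1) hopen (by norm_num)
    exact this.differentiableOn (by norm_num)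
  have hder : ∀ r ∈ Ioi r₀, HasDerivAt (deriv h) (deriv (deriv h) r) r := by
    intro r hr
    exact ((hd2 r hr).differentiableAt (hopen.mem_nhds hr)).hasDerivAt
  -- derivative of y
  have hyd : ∀ r ∈ Ioi r₀,
      HasDerivAt y (2 * deriv h r * deriv (deriv h) r / (1 + (deriv h r) ^ 2) ^ 2) r := by
    intro r hr
    have hu : HasDerivAt (fun x => 1 + (deriv h x) ^ 2) (2 * deriv h r * deriv (deriv h) r) r := by
      have := ((hder r hr).pow 2).const_add (1 : ℝ)
      exact this.congr_deriv (by norm_num [mul_comm])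
    have hinv := hu.inv (hune r)
    have hneg := hinv.neg
    have heq : y =ᶠ[nhds r] fun x => -(1 + (deriv h x) ^ 2)⁻¹ := by
      filter_upwards [hopen.mem_nhds hr] with x hx
      rw [hy x hx]; field_simp
    have := hneg.congr_of_eventuallyEq heq
    exact this.congr_deriv (by field_simp)
  have hyderiv : ∀ r ∈ Ioi r₀,
      deriv y r = 2 * deriv h r * deriv (deriv h) r / (1 + (deriv h r) ^ 2) ^ 2 :=
    fun r hr => (hyd r hr).deriv
  -- pointwise identity R = ((n-1)/r) * ODE_LHS
  have hident : ∀ r ∈ Ioi r₀,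
      R r = (((n : ℝ) - 1) / r) *
        (deriv y r + (((n : ℝ) - 2) / r) * y r + ((n : ℝ) - 2) / r) := by
    intro r hr
    have hrne : r ≠ 0 := (hrpos r hr).ne'
    rw [hR r hr, hyderiv r hr, hy r hr]
    field_simp
    ring
  have hn1ne : ((n : ℝ) - 1) ≠ 0 := by nlinarith
  have part1 : (∀ r ∈ Ioi r₀, R r = 0) ↔
      (∀ r ∈ Ioi r₀, deriv y r + (((n : ℝ) - 2) / r) * y r + ((n : ℝ) - 2) / r = 0) := by
    constructor
    · intro hz r hr
      have := hident r hr
      rw [hz r hr] at this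
      have hc : (((n : ℝ) - 1) / r) ≠ 0 := div_ne_zero hn1ne (hrpos r hr).ne'
      exact (mul_eq_zero.1 this.symm).resolve_left hc
    · intro hz r hr
      rw [hident r hr, hz r hr, mul_zero]
  -- part 2
  have part2 : (∀ r ∈ Ioi r₀, deriv y r + (((n : ℝ) - 2) / r) * y r + ((n : ℝ) - 2) / r = 0) ↔
      (∃ C₁ : ℝ, ∀ r ∈ Ioi r₀, y r = C₁ * r ^ ((2 : ℝ) - (n : ℝ)) - 1) := by
    constructor
    · intro hode
      set g : ℝ → ℝ := fun r => r ^ ((n : ℝ) - 2) * (y r + 1) with hg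
      have hgd : ∀ r ∈ Ioi r₀, HasDerivAt g 0 r := by
        intro r hr
        have hrne : r ≠ 0 := (hrpos r hr).ne'
        have h1 : HasDerivAt (fun x : ℝ => x ^ ((n : ℝ) - 2))
            (((n : ℝ) - 2) * r ^ ((n : ℝ) - 2 - 1)) r :=
          Real.hasDerivAt_rpow_const (Or.inl hrne)
        have h2 : HasDerivAt (fun x => y x + 1) (deriv y r) r := (hyd r hr).deriv ▸ ((hyd r hr).add_const 1)
        have h3 := h1.mul h2
        have hrp1 : r ^ ((n : ℝ) - 2 - 1) = r ^ ((n : ℝ) - 2) / r := by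
          rw [Real.rpow_sub (hrpos r hr), Real.rpow_one]
        have hode' := hode r hr
        have hdyr : deriv y r = -(((n : ℝ) - 2) / r) * (y r + 1) := by linarith [hode r hr]
        have : ((n : ℝ) - 2) * r ^ ((n : ℝ) - 2 - 1) * (y r + 1)
            + r ^ ((n : ℝ) - 2) * deriv y r = 0 := by
          rw [hrp1, hdyr]
          field_simp
          ring
        rw [← this]
        exact h3
      -- g is constant on Ioi r₀
      have hconst : ∀ r ∈ Ioi r₀, g r = g (r₀ + 1) := by
        intro r hr
        have hmem : r₀ + 1 ∈ Ioi r₀ := by simp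
        have hcv : Convex ℝ (Ioi r₀) := convex_Ioi r₀
        refine hcv.is_const_of_fderivWithin_eq_zero (f := g)
          (fun x hx => ((hgd x hx).differentiableAt).differentiableWithinAt)
          (fun x hx => ?_) hr hmem
        have := ((hgd x hx).hasFDerivAt.hasFDerivWithinAt).fderivWithin
          (hopen.uniqueDiffOn x hx)
        rw [this]
        exact ContinuousLinearMap.ext fun v => by simp
      refine ⟨g (r₀ + 1), fun r hr => ?_⟩
      have hgrc := hconst r hr
      have hrp : (0 : ℝ) < r ^ ((n : ℝ) - 2) := Real.rpow_pos_of_pos (hrpos r hr) _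
      have h2n : r ^ ((2 : ℝ) - (n : ℝ)) = (r ^ ((n : ℝ) - 2))⁻¹ := by
        rw [← Real.rpow_neg (hrpos r hr).le]
        ring_nf
      rw [h2n]
      have : y r + 1 = g (r₀ + 1) / r ^ ((n : ℝ) - 2) := by
        rw [← hgrc, hg]
        field_simp
      rw [div_eq_mul_inv] at this
      linarith
    · rintro ⟨C₁, hC⟩ r hr
      have hrne : r ≠ 0 := (hrpos r hr).ne'
      have h1 : HasDerivAt (fun x : ℝ => C₁ * x ^ ((2 : ℝ) - (n : ℝ)) - 1)
          (C₁ * (((2 : ℝ) - (n : ℝ)) * r ^ ((2 : ℝ) - (n : ℝ) - 1))) r :=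
        ((Real.hasDerivAt_rpow_const (Or.inl hrne)).const_mul C₁).sub_const 1
      have heq : y =ᶠ[nhds r] fun x => C₁ * x ^ ((2 : ℝ) - (n : ℝ)) - 1 := by
        filter_upwards [hopen.mem_nhds hr] with x hx
        exact hC x hx
      have hdy : deriv y r = C₁ * (((2 : ℝ) - (n : ℝ)) * r ^ ((2 : ℝ) - (n : ℝ) - 1)) :=
        (h1.congr_of_eventuallyEq heq).deriv
      rw [hdy, hC r hr]
      have hrp1 : r ^ ((2 : ℝ) - (n : ℝ) - 1) = r ^ ((2 : ℝ) - (n : ℝ)) / r := by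
        rw [Real.rpow_sub (hrpos r hr), Real.rpow_one]
      rw [hrp1]
      field_simp
      ring
  refine ⟨part1, part2, fun C₁ => ?_⟩
  constructor
  · intro hC r hr
    have hrp : (0 : ℝ) < r ^ ((n : ℝ) - 2) := Real.rpow_pos_of_pos (hrpos r hr) _
    have h2n : r ^ ((2 : ℝ) - (n : ℝ)) = (r ^ ((n : ℝ) - 2))⁻¹ := by
      rw [← Real.rpow_neg (hrpos r hr).le]; ring_nf
    set A := r ^ ((n : ℝ) - 2) with hA
    have hyeq : -1 / (1 + (deriv h r) ^ 2) = C₁ * A⁻¹ - 1 := by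
      rw [← h2n, ← hC r hr, hy r hr]
    have hpne : (deriv h r) ^ 2 ≠ 0 := pow_ne_zero 2 (h' r hr)
    have hAC : A - C₁ ≠ 0 := by
      intro hz
      have hCA : C₁ = A := by linarith
      rw [hCA] at hyeq
      rw [mul_inv_cancel₀ hrp.ne'] at hyeq
      have : (-1 : ℝ) = 0 := by
        field_simp at hyeq
        norm_num at hyeq
      norm_num at this
    -- from hyeq derive (deriv h r)^2 = C₁ / (A - C₁)
    have hu := hune r
    field_simp at hyeq
    rw [eq_div_iff hAC]
    nlinarith [hyeq]
  · intro hC r hr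
    have hrp : (0 : ℝ) < r ^ ((n : ℝ) - 2) := Real.rpow_pos_of_pos (hrpos r hr) _
    have h2n : r ^ ((2 : ℝ) - (n : ℝ)) = (r ^ ((n : ℝ) - 2))⁻¹ := by
      rw [← Real.rpow_neg (hrpos r hr).le]; ring_nf
    set A := r ^ ((n : ℝ) - 2) with hA
    have hp2 := hC r hr
    have hpne : (deriv h r) ^ 2 ≠ 0 := pow_ne_zero 2 (h' r hr)
    have hAC : A - C₁ ≠ 0 := by
      intro hz
      rw [hz, div_zero] at hp2
      exact hpne hp2
    have hAne : A ≠ 0 := hrp.ne'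
    have hkey : 1 + C₁ / (A - C₁) = A / (A - C₁) := by field_simp; ring
    rw [hy r hr, h2n, hp2, hkey]
    rw [div_div_eq_mul_div]
    field_simp
    ring
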